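/- Let T = S(d_1,…,d_k) be a spider and let f be an independent broadcast on T of maximum weight (an α_b-broadcast). Then every vertex v with f(v) > 0 is a leaf of T. -/

import Mathlib

variable {V : Type*}

/-- The eccentricity of a vertex: the maximum distance to any vertex. -/
noncomputable def ecc (G : SimpleGraph V) [Fintype V] (v : V) : ℕ :=
  Finset.univ.sup (fun u => G.dist u v)

/-- A broadcast on `G`: a function assigning each vertex a power at most its eccentricity. -/
def IsBroadcast (G : SimpleGraph V) [Fintype V] (f : V → ℕ) : Prop :=
  ∀ v, f v ≤ ecc G v

/-- `u` hears the broadcasting vertex `v`. -/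
def Hears (G : SimpleGraph V) (f : V → ℕ) (u v : V) : Prop :=
  0 < f v ∧ G.dist u v ≤ f v

/-- An independent broadcast: no broadcasting vertex hears another vertex. -/
def IsIndepBroadcast (G : SimpleGraph V) [Fintype V] (f : V → ℕ) : Prop :=
  IsBroadcast G f ∧ ∀ v w, 0 < f v → v ≠ w → ¬ Hears G f v w

/-- The broadcast independence number: the maximum weight of an independent broadcast. -/
noncomputable def alphaB (G : SimpleGraph V) [Fintype V] : ℕ :=
  sSup {w | ∃ f, IsIndepBroadcast G f ∧ w = ∑ v, f v}

/-- Vertices of the spider `S(d 0, …, d (k-1))`: `none` is the branch vertex `u`, and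
`some ⟨i, j⟩` is the vertex at distance `j + 1` from `u` on the `i`-th branch. -/
abbrev SpiderVert (k : ℕ) (d : Fin k → ℕ) : Type := Option (Σ i : Fin k, Fin (d i))

/-- The spider `S(d 0, …, d (k-1))`: the tree obtained from the star `K_{1,k}` with
center `u` by subdividing edges so that the `i`-th leaf is at distance `d i` from `u`. -/
def spider (k : ℕ) (d : Fin k → ℕ) : SimpleGraph (SpiderVert k d) where
  Adj x y :=
    match x, y with
    | none, none => False
    | none, some ⟨_, j⟩ => (j : ℕ) = 0
    | some ⟨_, j⟩, none => (j : ℕ) = 0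
    | some ⟨i, j⟩, some ⟨i', j'⟩ =>
        (i : ℕ) = (i' : ℕ) ∧ ((j : ℕ) + 1 = (j' : ℕ) ∨ (j' : ℕ) + 1 = (j : ℕ))
  symm := ⟨by
    rintro (_ | ⟨i, j⟩) (_ | ⟨i', j'⟩) hxy <;> simp_all <;> omega⟩
  loopless := ⟨by
    rintro (_ | ⟨i, j⟩) hxy <;> simp_all⟩

/-- The `i`-th leaf of the spider, at distance `d i` from the branch vertex. -/
def spiderLeaf (k : ℕ) (d : Fin k → ℕ) (hd : ∀ i, 1 ≤ d i) (i : Fin k) : SpiderVert k d :=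
  some ⟨i, ⟨d i - 1, by have := hd i; omega⟩⟩

/-- A leaf of the spider: the end vertex of a branch. -/
def IsSpiderLeaf (k : ℕ) (d : Fin k → ℕ) : SpiderVert k d → Prop
  | none => False
  | some ⟨i, j⟩ => (j : ℕ) + 1 = d i


section SpiderLemmas

variable {k : ℕ} {d : Fin k → ℕ}

/-- Depth of a vertex: distance from the branch vertex (by construction). -/
def sdepth : SpiderVert k d → ℕ
  | none => 0
  | some ⟨_, j⟩ => (j : ℕ) + 1

/-- `x` lies on branch `i` (the center lies on every branch). -/
def onB (i : Fin k) : SpiderVert k d → Prop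
  | none => True
  | some ⟨i', _⟩ => i' = i

instance (i : Fin k) : DecidablePred (onB (d := d) i) := fun x =>
  match x with
  | none => .isTrue trivial
  | some ⟨i', _⟩ => inferInstanceAs (Decidable (i' = i))

lemma sdepth_le_of_onB {i : Fin k} {x : SpiderVert k d} (h : onB i x) : sdepth x ≤ d i := by
  match x with
  | none => exact Nat.zero_le _
  | some ⟨i', j⟩ =>
      have : i' = i := h
      subst this
      exact j.isLt

lemma onB_inj {i : Fin k} {x y : SpiderVert k d} (hx : onB i x) (hy : onB i y)
    (hxy : sdepth x = sdepth y) : x = y := by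
  match x, y with
  | none, none => rfl
  | none, some ⟨i', j⟩ => simp [sdepth] at hxy
  | some ⟨i', j⟩, none => simp [sdepth] at hxy
  | some ⟨i1, j1⟩, some ⟨i2, j2⟩ =>
      have h1 : i1 = i := hx
      have h2 : i2 = i := hy
      subst h1; subst h2
      simp only [sdepth] at hxy
      have : j1 = j2 := Fin.ext (by omega)
      rw [this]

lemma adj_toCenter (i : Fin k) (j : Fin (d i)) (hj : (j : ℕ) = 0) :
    (spider k d).Adj (some ⟨i, j⟩) none := hj

lemma adj_step (i : Fin k) (j j' : Fin (d i)) (hj : (j' : ℕ) + 1 = (j : ℕ)) :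
    (spider k d).Adj (some ⟨i, j⟩) (some ⟨i, j'⟩) := ⟨rfl, Or.inr hj⟩

/-- Walk from depth `n+1` on branch `i` down to the center. -/
def walkC (i : Fin k) : (n : ℕ) → (h : n < d i) → (spider k d).Walk (some ⟨i, ⟨n, h⟩⟩) none
  | 0, h => SimpleGraph.Walk.cons (adj_toCenter i ⟨0, h⟩ rfl) SimpleGraph.Walk.nil
  | n+1, h => SimpleGraph.Walk.cons
      (adj_step i ⟨n+1, h⟩ ⟨n, by omega⟩ rfl) (walkC i n (by omega))

lemma walkC_length (i : Fin k) : ∀ (n : ℕ) (h : n < d i), (walkC i n h).length = n + 1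
  | 0, h => rfl
  | n+1, h => by simp [walkC, walkC_length i n]

/-- Walk from depth `b+m` down to depth `b` on branch `i`. -/
def walkD (i : Fin k) (b : ℕ) (hb : b < d i) :
    (m : ℕ) → (h : b + m < d i) → (spider k d).Walk (some ⟨i, ⟨b + m, h⟩⟩) (some ⟨i, ⟨b, hb⟩⟩)
  | 0, _ => SimpleGraph.Walk.nil
  | m+1, h => SimpleGraph.Walk.cons
      (adj_step i ⟨b+m+1, h⟩ ⟨b+m, by omega⟩ rfl) (walkD i b hb m (by omega))

lemma walkD_length (i : Fin k) (b : ℕ) (hb : b < d i) :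
    ∀ (m : ℕ) (h : b + m < d i), (walkD i b hb m h).length = m
  | 0, _ => rfl
  | m+1, h => by simp [walkD, walkD_length i b hb m]

lemma reach_center (x : SpiderVert k d) : (spider k d).Reachable x none := by
  match x with
  | none => exact SimpleGraph.Reachable.refl none
  | some ⟨i, j⟩ => exact ⟨walkC i j.val j.isLt⟩

lemma reach_all (x y : SpiderVert k d) : (spider k d).Reachable x y :=
  (reach_center x).trans (reach_center y).symm

/-- Lipschitz potential witnessing distance lower bounds. -/
def pot (i : Fin k) : SpiderVert k d → ℤ
  | none => 0
  | some ⟨i', j⟩ => if i' = i then (j : ℤ) + 1 else -((j : ℤ) + 1)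

lemma pot_adj {i : Fin k} {x y : SpiderVert k d} (h : (spider k d).Adj x y) :
    |pot i x - pot i y| ≤ 1 := by
  match x, y with
  | none, none => exact absurd h (by simp [spider])
  | none, some ⟨i', j⟩ =>
      have hj : (j : ℕ) = 0 := h
      simp only [pot]
      split <;> simp [hj]
  | some ⟨i', j⟩, none =>
      have hj : (j : ℕ) = 0 := h
      simp only [pot]
      split <;> simp [hj]
  | some ⟨i1, j1⟩, some ⟨i2, j2⟩ =>
      obtain ⟨h1, h2⟩ := (h : (i1 : ℕ) = (i2 : ℕ) ∧ _)
      have : i1 = i2 := Fin.ext h1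
      subst this
      simp only [pot]
      split <;> rw [abs_le] <;> constructor <;> push_cast <;> omega

lemma pot_walk (i : Fin k) {x y : SpiderVert k d} (w : (spider k d).Walk x y) :
    |pot i x - pot i y| ≤ (w.length : ℤ) := by
  induction w with
  | nil => simp
  | cons h p ih =>
      rename_i u a b
      calc |pot i u - pot i b| ≤ |pot i u - pot i a| + |pot i a - pot i b| := abs_sub_le _ _ _
        _ ≤ 1 + p.length := add_le_add (pot_adj h) ih
        _ = ((SimpleGraph.Walk.cons h p).length : ℤ) := by
            simp [SimpleGraph.Walk.length_cons]; ring

lemma pot_dist (i : Fin k) (x y : SpiderVert k d) :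
    |pot i x - pot i y| ≤ ((spider k d).dist x y : ℤ) := by
  obtain ⟨w, hw⟩ := (reach_all x y).exists_walk_length_eq_dist
  rw [← hw]
  exact pot_walk i w

lemma pot_center (i : Fin k) : pot i (none : SpiderVert k d) = 0 := rfl

lemma pot_same (i : Fin k) (j : Fin (d i)) :
    pot i (some ⟨i, j⟩ : SpiderVert k d) = (j : ℤ) + 1 := if_pos rfl

lemma pot_other {i i' : Fin k} (hne : i' ≠ i) (j : Fin (d i')) :
    pot i (some ⟨i', j⟩ : SpiderVert k d) = -((j : ℤ) + 1) := if_neg hne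

lemma dist_center_eq (i : Fin k) (j : Fin (d i)) :
    (spider k d).dist (some ⟨i, j⟩) none = (j : ℕ) + 1 := by
  refine le_antisymm ?_ ?_
  · calc (spider k d).dist (some ⟨i, j⟩) none ≤ (walkC i j.val j.isLt).length :=
          SimpleGraph.dist_le _
      _ = (j : ℕ) + 1 := walkC_length i j.val j.isLt
  · have hp := pot_dist i (some ⟨i, j⟩) none
    rw [pot_same, pot_center] at hp
    have := (le_abs_self _).trans hp
    omega

lemma dist_same_eq (i : Fin k) (j1 j2 : Fin (d i)) (h : (j2 : ℕ) ≤ (j1 : ℕ)) :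
    (spider k d).dist (some ⟨i, j1⟩) (some ⟨i, j2⟩) = (j1 : ℕ) - (j2 : ℕ) := by
  refine le_antisymm ?_ ?_
  · have h2 : (j2 : ℕ) + ((j1 : ℕ) - (j2 : ℕ)) < d i := by omega
    have hval : (j2 : ℕ) + ((j1 : ℕ) - (j2 : ℕ)) = (j1 : ℕ) := by omega
    have e : (some (⟨i, ⟨(j2 : ℕ) + ((j1 : ℕ) - (j2 : ℕ)), h2⟩⟩ : Σ i, Fin (d i))
        : SpiderVert k d) = some ⟨i, j1⟩ := by
      congr 1
      exact congrArg (Sigma.mk i) (Fin.ext hval)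
    calc (spider k d).dist (some ⟨i, j1⟩) (some ⟨i, j2⟩)
        = (spider k d).dist (some ⟨i, ⟨(j2 : ℕ) + ((j1 : ℕ) - (j2 : ℕ)), h2⟩⟩)
            (some ⟨i, j2⟩) := by rw [e]
      _ ≤ (walkD i j2 j2.isLt ((j1 : ℕ) - (j2 : ℕ)) h2).length := SimpleGraph.dist_le _
      _ = (j1 : ℕ) - (j2 : ℕ) := walkD_length i j2 j2.isLt _ h2
  · have hp := pot_dist i (some ⟨i, j1⟩) (some ⟨i, j2⟩)
    rw [pot_same, pot_same] at hp
    have := (le_abs_self _).trans hp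
    omega

lemma dist_cross_eq (i1 i2 : Fin k) (hne : i1 ≠ i2) (j1 : Fin (d i1)) (j2 : Fin (d i2)) :
    (spider k d).dist (some ⟨i1, j1⟩) (some ⟨i2, j2⟩) = ((j1 : ℕ) + 1) + ((j2 : ℕ) + 1) := by
  refine le_antisymm ?_ ?_
  · obtain ⟨w1, h1⟩ := (reach_center (some ⟨i1, j1⟩ : SpiderVert k d)).exists_walk_length_eq_dist
    obtain ⟨w2, h2⟩ := (reach_center (some ⟨i2, j2⟩ : SpiderVert k d)).exists_walk_length_eq_dist
    calc (spider k d).dist (some ⟨i1, j1⟩) (some ⟨i2, j2⟩)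
        ≤ (w1.append w2.reverse).length := SimpleGraph.dist_le _
      _ = ((j1 : ℕ) + 1) + ((j2 : ℕ) + 1) := by
          rw [SimpleGraph.Walk.length_append, SimpleGraph.Walk.length_reverse, h1, h2,
            dist_center_eq, dist_center_eq]
  · have hp := pot_dist i1 (some ⟨i1, j1⟩) (some ⟨i2, j2⟩)
    rw [pot_same, pot_other hne.symm] at hp
    have := (le_abs_self _).trans hp
    omega

lemma dist_onB {i : Fin k} {x y : SpiderVert k d} (hx : onB i x) (hy : onB i y) :
    (spider k d).dist x y = max (sdepth x) (sdepth y) - min (sdepth x) (sdepth y) := by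
  match x, y with
  | none, none => simp [sdepth]
  | none, some ⟨i2, j2⟩ =>
      have h2 : i2 = i := hy
      subst h2
      rw [SimpleGraph.dist_comm, dist_center_eq]
      simp [sdepth]
  | some ⟨i1, j1⟩, none =>
      have h1 : i1 = i := hx
      subst h1
      rw [dist_center_eq]
      simp [sdepth]
  | some ⟨i1, j1⟩, some ⟨i2, j2⟩ =>
      have h1 : i1 = i := hx
      have h2 : i2 = i := hy
      subst h1
      subst h2
      rcases le_total (j2 : ℕ) (j1 : ℕ) with h | h
      · rw [dist_same_eq _ j1 j2 h]
        simp only [sdepth]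
        omega
      · rw [SimpleGraph.dist_comm, dist_same_eq _ j2 j1 h]
        simp only [sdepth]
        omega

lemma dist_offB {i : Fin k} {x y : SpiderVert k d} (hx : onB i x) (hy : ¬ onB i y) :
    (spider k d).dist x y = sdepth x + sdepth y := by
  match y with
  | none => exact absurd trivial hy
  | some ⟨i2, j2⟩ =>
      have h2 : i2 ≠ i := hy
      match x with
      | none =>
          rw [SimpleGraph.dist_comm, dist_center_eq]
          simp [sdepth]
      | some ⟨i1, j1⟩ =>
          have h1 : i1 = i := hx
          subst h1
          rw [dist_cross_eq _ i2 (Ne.symm h2) j1 j2]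
          simp [sdepth]

lemma onB_leaf (hd : ∀ i, 1 ≤ d i) (i : Fin k) : onB i (spiderLeaf k d hd i) := rfl

lemma sdepth_leaf (hd : ∀ i, 1 ≤ d i) (i : Fin k) : sdepth (spiderLeaf k d hd i) = d i := by
  have := hd i
  simp only [spiderLeaf, sdepth]
  omega

lemma ecc_leaf_ge (hd : ∀ i, 1 ≤ d i) (i j : Fin k) (hij : j ≠ i) :
    d i + d j ≤ ecc (spider k d) (spiderLeaf k d hd i) := by
  have hmem := Finset.mem_univ (spiderLeaf k d hd j)
  have hle : (spider k d).dist (spiderLeaf k d hd j) (spiderLeaf k d hd i)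
      ≤ ecc (spider k d) (spiderLeaf k d hd i) :=
    Finset.le_sup (f := fun u => (spider k d).dist u (spiderLeaf k d hd i)) hmem
  have hoff : ¬ onB j (spiderLeaf k d hd i) := by
    simp only [spiderLeaf, onB]
    exact fun h => hij h.symm
  rw [dist_offB (onB_leaf hd j) hoff, sdepth_leaf, sdepth_leaf] at hle
  calc d i + d j = d j + d i := by omega
    _ ≤ _ := hle

lemma ecc_le_bound (hd : ∀ i, 1 ≤ d i) {i m : Fin k} {w : SpiderVert k d}
    (hw : onB i w) (hwd : sdepth w < d i) (hm : ∀ j, j ≠ i → d j ≤ d m)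
    (h0 : sdepth w = 0 → ∀ j, d j ≤ d i) :
    ecc (spider k d) w ≤ d i + d m - 1 := by
  apply Finset.sup_le
  intro u _
  by_cases hu : onB i u
  · rw [SimpleGraph.dist_comm, dist_onB hw hu]
    have h1 := sdepth_le_of_onB hu
    have h2 := sdepth_le_of_onB hw
    have h3 := hd m
    omega
  · rw [SimpleGraph.dist_comm, dist_offB hw hu]
    match u with
    | none => exact absurd trivial hu
    | some ⟨ju, tu⟩ =>
        have hji : ju ≠ i := hu
        have h1 : sdepth (some ⟨ju, tu⟩ : SpiderVert k d) ≤ d ju := sdepth_le_of_onB rfl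
        have h2 : d ju ≤ d m := hm ju hji
        rcases Nat.eq_zero_or_pos (sdepth w) with h3 | h3
        · have h4 := h0 h3 ju
          have h5 := hd m
          omega
        · omega

lemma sum_pair {W : Type*} [Fintype W] [DecidableEq W] (g : W → ℕ) {x y : W} (hxy : x ≠ y) :
    ∑ v, g v = g x + g y + ∑ v ∈ (Finset.univ.erase x).erase y, g v := by
  rw [← Finset.add_sum_erase _ g (Finset.mem_univ x),
    ← Finset.add_sum_erase _ g (Finset.mem_erase.2 ⟨Ne.symm hxy, Finset.mem_univ y⟩)]
  omega

lemma weight_le_alphaB {W : Type*} [Fintype W] (G : SimpleGraph W) (g : W → ℕ)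
    (hg : IsIndepBroadcast G g) : ∑ v, g v ≤ alphaB G := by
  apply le_csSup
  · refine ⟨∑ v, ecc G v, ?_⟩
    rintro w ⟨h, hh, rfl⟩
    exact Finset.sum_le_sum fun v _ => hh.1 v
  · exact ⟨g, hg, rfl⟩

lemma dist_to_leaf (hd : ∀ i, 1 ≤ d i) {i : Fin k} {z x : SpiderVert k d}
    (hz : onB i z) (hx : onB i x → sdepth x ≤ sdepth z) :
    (spider k d).dist x (spiderLeaf k d hd i)
      = (spider k d).dist x z + (d i - sdepth z) := by
  have hzle := sdepth_le_of_onB hz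
  by_cases hxB : onB i x
  · rw [dist_onB hxB (onB_leaf hd i), dist_onB hxB hz, sdepth_leaf]
    have hxle := hx hxB
    omega
  · rw [SimpleGraph.dist_comm (u := x) (v := spiderLeaf k d hd i),
      dist_offB (onB_leaf hd i) hxB,
      SimpleGraph.dist_comm (u := x) (v := z), dist_offB hz hxB, sdepth_leaf]
    omega

lemma improve (hd : ∀ i, 1 ≤ d i) (f : SpiderVert k d → ℕ)
    (hf : IsIndepBroadcast (spider k d) f) {i m : Fin k} (him : m ≠ i)
    {z : SpiderVert k d} (hz : onB i z) (hzd : sdepth z < d i) (ha : 0 < f z)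
    (hmaxd : ∀ x, 0 < f x → onB i x → x ≠ spiderLeaf k d hd i → sdepth x ≤ sdepth z)
    (N : ℕ)
    (hgain : f z + f (spiderLeaf k d hd i) + 1 ≤ N)
    (hN2 : N ≤ f z + (d i - sdepth z))
    (hN3 : N ≤ d i + d m) :
    ∃ g : SpiderVert k d → ℕ,
      IsIndepBroadcast (spider k d) g ∧ ∑ v, f v < ∑ v, g v := by
  classical
  set ℓ := spiderLeaf k d hd i with hℓdef
  have hsep : ∀ x y : SpiderVert k d, 0 < f x → 0 < f y → x ≠ y →
      f y < (spider k d).dist x y := by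
    intro x y hx hy hxy
    by_contra hc
    exact hf.2 x y hx hxy ⟨hy, Nat.le_of_not_lt hc⟩
  have hzℓ : z ≠ ℓ := by
    intro h
    rw [h, sdepth_leaf] at hzd
    omega
  set g : SpiderVert k d → ℕ := fun x => if x = ℓ then N else if x = z then 0 else f x
    with hgdef
  have hgℓ : g ℓ = N := by simp [hgdef]
  have hgz : g z = 0 := by simp [hgdef, hzℓ]
  have hgother : ∀ x, x ≠ ℓ → x ≠ z → g x = f x := by
    intro x h1 h2
    simp [hgdef, h1, h2]
  -- key distance identity
  have hkey : ∀ x : SpiderVert k d, 0 < f x → x ≠ ℓ →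
      (spider k d).dist x ℓ = (spider k d).dist x z + (d i - sdepth z) := by
    intro x hx hxl
    exact dist_to_leaf hd hz (fun hB => hmaxd x hx hB hxl)
  refine ⟨g, ⟨?_, ?_⟩, ?_⟩
  · -- broadcast
    intro x
    by_cases h1 : x = ℓ
    · subst h1
      rw [hgℓ]
      exact hN3.trans (ecc_leaf_ge hd i m him)
    · by_cases h2 : x = z
      · subst h2; rw [hgz]; exact Nat.zero_le _
      · rw [hgother x h1 h2]; exact hf.1 x
  · -- independence
    intro x y hx hxy hears
    obtain ⟨hy, hdist⟩ := hears
    by_cases h2 : y = z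
    · rw [h2, hgz] at hy; omega
    · by_cases h1 : x = z
      · rw [h1, hgz] at hx; omega
      · by_cases hyl : y = ℓ
        · -- x hears the new leaf broadcast: impossible
          subst hyl
          rw [hgℓ] at hdist
          have hxl : x ≠ ℓ := hxy
          have hfx : 0 < f x := by rw [← hgother x hxl h1]; exact hx
          have hd1 := hsep x z hfx ha h1
          rw [hkey x hfx hxl] at hdist
          omega
        · by_cases hxl : x = ℓ
          · -- the new leaf broadcast hears x : impossible
            subst hxl
            have hfy : 0 < f y := by rw [← hgother y hyl h2]; exact hy
            rw [hgother y hyl h2] at hdist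
            have hd1 := hsep z y ha hfy (fun h => h2 h.symm)
            rw [SimpleGraph.dist_comm, hkey y hfy hyl] at hdist
            rw [SimpleGraph.dist_comm] at hd1
            omega
          · have hfy : 0 < f y := by rw [← hgother y hyl h2]; exact hy
            have hfx : 0 < f x := by rw [← hgother x hxl h1]; exact hx
            rw [hgother y hyl h2] at hdist
            exact absurd hdist (Nat.not_le_of_lt (hsep x y hfx hfy hxy))
  · -- weight increases
    have e1 := sum_pair f (Ne.symm hzℓ)
    have e2 := sum_pair g (Ne.symm hzℓ)
    have e3 : ∑ v ∈ (Finset.univ.erase ℓ).erase z, g v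
        = ∑ v ∈ (Finset.univ.erase ℓ).erase z, f v := by
      apply Finset.sum_congr rfl
      intro x hx
      rw [Finset.mem_erase, Finset.mem_erase] at hx
      exact hgother x hx.2.1 hx.1
    rw [e1, e2, e3, hgℓ, hgz]
    omega

end SpiderLemmas

/-- in a maximum-weight independent broadcast on a spider `S(d_1, …, d_k)`,
every broadcasting vertex is a leaf. -/
theorem stmt8 (k : ℕ) (hk : 3 ≤ k) (d : Fin k → ℕ) (hd : ∀ i, 1 ≤ d i) (hmono : Monotone d)
    (f : SpiderVert k d → ℕ) (hf : IsIndepBroadcast (spider k d) f)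
    (hmax : ∑ v, f v = alphaB (spider k d)) :
    ∀ v : SpiderVert k d, 0 < f v → IsSpiderLeaf k d v := by
  intro v hv
  by_contra hnl
  classical
  have hk1 : k - 1 < k := by omega
  have hk2 : k - 2 < k := by omega
  -- choose the branch `i` of `v`
  obtain ⟨i, hvB, hvd, hlast⟩ :
      ∃ i : Fin k, onB i v ∧ sdepth v < d i ∧ (sdepth v = 0 → ∀ j, d j ≤ d i) := by
    match v with
    | none =>
        refine ⟨⟨k - 1, hk1⟩, trivial, hd _, fun _ j => hmono ?_⟩
        exact Fin.le_def.2 (by simp; omega)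
    | some ⟨i0, j0⟩ =>
        refine ⟨i0, rfl, ?_, ?_⟩
        · have h1 : (j0 : ℕ) < d i0 := j0.isLt
          have h2 : (j0 : ℕ) + 1 ≠ d i0 := hnl
          simp only [sdepth]
          omega
        · intro h
          simp [sdepth] at h
  -- choose `m`, the longest branch other than `i`
  obtain ⟨m, him, hm⟩ : ∃ m : Fin k, m ≠ i ∧ ∀ j, j ≠ i → d j ≤ d m := by
    by_cases hi : (i : ℕ) = k - 1
    · refine ⟨⟨k - 2, hk2⟩, ?_, ?_⟩
      · intro h
        have := congrArg Fin.val h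
        simp at this
        omega
      · intro j hj
        apply hmono
        have hjv : (j : ℕ) ≠ k - 1 := fun h => hj (Fin.ext (by simp [h, hi]))
        have := j.isLt
        exact Fin.le_def.2 (by simp; omega)
    · refine ⟨⟨k - 1, hk1⟩, ?_, ?_⟩
      · intro h
        have := congrArg Fin.val h
        simp at this
        omega
      · intro j hj
        have := j.isLt
        exact hmono (Fin.le_def.2 (by simp; omega))
  set ℓ := spiderLeaf k d hd i with hℓdef
  have hsep : ∀ x y : SpiderVert k d, 0 < f x → 0 < f y → x ≠ y →
      f y < (spider k d).dist x y := by
    intro x y hx hy hxy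
    by_contra hc
    exact hf.2 x y hx hxy ⟨hy, Nat.le_of_not_lt hc⟩
  -- pick the deepest broadcasting vertex on branch `i`
  set Bi := Finset.univ.filter (fun x : SpiderVert k d => 0 < f x ∧ onB i x) with hBidef
  have hvBi : v ∈ Bi := by
    rw [hBidef, Finset.mem_filter]
    exact ⟨Finset.mem_univ v, hv, hvB⟩
  obtain ⟨w, hwBi, hwmax⟩ := Finset.exists_max_image Bi sdepth ⟨v, hvBi⟩
  rw [hBidef, Finset.mem_filter] at hwBi
  obtain ⟨-, hfw, hwB⟩ := hwBi
  have hwmax' : ∀ x : SpiderVert k d, 0 < f x → onB i x → sdepth x ≤ sdepth w := by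
    intro x h1 h2
    exact hwmax x (by rw [hBidef, Finset.mem_filter]; exact ⟨Finset.mem_univ x, h1, h2⟩)
  have hwle : sdepth w ≤ d i := sdepth_le_of_onB hwB
  have himpr : ∃ g : SpiderVert k d → ℕ,
      IsIndepBroadcast (spider k d) g ∧ ∑ x, f x < ∑ x, g x := by
    rcases lt_or_eq_of_le hwle with hcase | hcase
    · -- CASE A : the deepest broadcaster on branch i is not the leaf
      have hfl : f ℓ = 0 := by
        by_contra hpos
        have := hwmax' ℓ (Nat.pos_of_ne_zero hpos) (onB_leaf hd i)
        rw [hℓdef, sdepth_leaf] at this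
        omega
      have hfwecc : f w ≤ d i + d m - 1 := by
        refine (hf.1 w).trans (ecc_le_bound hd hwB hcase hm ?_)
        intro h0
        have hv0 : sdepth v = 0 := by
          have := hwmax' v hv hvB
          omega
        exact hlast hv0
      have hdm := hd m
      have hdi := hd i
      refine improve hd f hf him hwB hcase hfw
        (fun x h1 h2 _ => hwmax' x h1 h2)
        (min (f w + (d i - sdepth w)) (d i + d m)) ?_ (min_le_left _ _) (min_le_right _ _)
      rw [← hℓdef, hfl]
      exact le_min (by omega) (by omega)
    · -- CASE B : the leaf of branch i broadcasts
      have hwl : w = ℓ := by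
        refine onB_inj hwB (onB_leaf hd i) ?_
        rw [hcase, sdepth_leaf]
      have hfℓ : 0 < f ℓ := hwl ▸ hfw
      -- pick the deepest broadcasting non-leaf vertex on branch i
      set Bz := Finset.univ.filter
        (fun x : SpiderVert k d => 0 < f x ∧ onB i x ∧ sdepth x < d i) with hBzdef
      have hvBz : v ∈ Bz := by
        rw [hBzdef, Finset.mem_filter]
        exact ⟨Finset.mem_univ v, hv, hvB, hvd⟩
      obtain ⟨z, hzBz, hzmax⟩ := Finset.exists_max_image Bz sdepth ⟨v, hvBz⟩
      rw [hBzdef, Finset.mem_filter] at hzBz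
      obtain ⟨-, hfz, hzB, hzd⟩ := hzBz
      have hzℓ : z ≠ ℓ := by
        intro h
        rw [h, hℓdef, sdepth_leaf] at hzd
        omega
      have hmaxd : ∀ x : SpiderVert k d, 0 < f x → onB i x → x ≠ ℓ → sdepth x ≤ sdepth z := by
        intro x h1 h2 h3
        have hxle := sdepth_le_of_onB h2
        have hxlt : sdepth x < d i := by
          rcases lt_or_eq_of_le hxle with h | h
          · exact h
          · exact absurd (onB_inj h2 (onB_leaf hd i) (by rw [h, sdepth_leaf])) h3
        exact hzmax x (by rw [hBzdef, Finset.mem_filter]; exact ⟨Finset.mem_univ x, h1, h2, hxlt⟩)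
      have hdistzℓ : (spider k d).dist z ℓ = d i - sdepth z := by
        rw [hℓdef, dist_onB hzB (onB_leaf hd i), sdepth_leaf]
        omega
      have hslb : f ℓ + sdepth z + 1 ≤ d i := by
        have := hsep z ℓ hfz hfℓ hzℓ
        omega
      have hsla : f z + sdepth z + 1 ≤ d i := by
        have h1 := hsep ℓ z hfℓ hfz (Ne.symm hzℓ)
        rw [SimpleGraph.dist_comm] at h1
        omega
      by_cases hB1 : f z + f ℓ + 1 ≤ d i + d m
      · -- CASE B1
        exact improve hd f hf him hzB hzd hfz hmaxd (f z + f ℓ + 1) le_rfl (by omega) hB1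
      · -- CASE B2 : f is just two broadcasts on branch i; use two long leaves instead
        push_neg at hB1
        have honly : ∀ x : SpiderVert k d, 0 < f x → x = z ∨ x = ℓ := by
          intro x hx
          by_contra hc
          push_neg at hc
          obtain ⟨hxz, hxl⟩ := hc
          have h1 : f z < (spider k d).dist x z := hsep x z hx hfz hxz
          have h2 : (spider k d).dist x z ≤ sdepth z + d m := by
            by_cases hxB : onB i x
            · rw [dist_onB hxB hzB]
              have := hmaxd x hx hxB hxl
              omega
            · rw [SimpleGraph.dist_comm, dist_offB hzB hxB]
              match x with
              | none => exact absurd trivial hxB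
              | some ⟨jx, tx⟩ =>
                  have hjx : jx ≠ i := hxB
                  have h3 : sdepth (some ⟨jx, tx⟩ : SpiderVert k d) ≤ d jx :=
                    sdepth_le_of_onB rfl
                  have h4 := hm jx hjx
                  omega
          omega
        set ℓm := spiderLeaf k d hd m with hℓmdef
        have hℓℓm : ℓ ≠ ℓm := by
          intro h
          have : onB i ℓm := h ▸ onB_leaf hd i
          exact him this
        have hoffm : ¬ onB i ℓm := fun h => him h
        have hdistℓℓm : (spider k d).dist ℓ ℓm = d i + d m := by
          rw [hℓdef, hℓmdef, dist_offB (onB_leaf hd i) hoffm, sdepth_leaf, sdepth_leaf]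
        set c := d i + d m - 1 with hcdef
        set g : SpiderVert k d → ℕ := fun x => if x = ℓ then c else if x = ℓm then c else 0
          with hgdef
        have hgℓ : g ℓ = c := by simp [hgdef]
        have hgℓm : g ℓm = c := by simp [hgdef, Ne.symm hℓℓm]
        have hgother : ∀ x, x ≠ ℓ → x ≠ ℓm → g x = 0 := by
          intro x h1 h2
          simp [hgdef, h1, h2]
        have hdm := hd m
        have hdi := hd i
        refine ⟨g, ⟨?_, ?_⟩, ?_⟩
        · intro x
          by_cases h1 : x = ℓ
          · subst h1
            rw [hgℓ]
            exact le_trans (by omega) (ecc_leaf_ge hd i m him)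
          · by_cases h2 : x = ℓm
            · subst h2
              rw [hgℓm]
              exact le_trans (by omega) (ecc_leaf_ge hd m i (Ne.symm him))
            · rw [hgother x h1 h2]
              exact Nat.zero_le _
        · intro x y hx hxy hears
          obtain ⟨hy, hdist⟩ := hears
          have hxmem : x = ℓ ∨ x = ℓm := by
            by_contra hc
            push_neg at hc
            rw [hgother x hc.1 hc.2] at hx
            omega
          have hymem : y = ℓ ∨ y = ℓm := by
            by_contra hc
            push_neg at hc
            rw [hgother y hc.1 hc.2] at hy
            omega
          rcases hxmem with h1 | h1 <;> rcases hymem with h2 | h2 <;> subst h1 <;> subst h2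
          · exact hxy rfl
          · rw [hgℓm, hdistℓℓm] at hdist
            omega
          · rw [hgℓ, SimpleGraph.dist_comm, hdistℓℓm] at hdist
            omega
          · exact hxy rfl
        · -- weights
          have e1 := sum_pair f (Ne.symm hzℓ)
          have ez : ∑ x ∈ (Finset.univ.erase ℓ).erase z, f x = 0 := by
            apply Finset.sum_eq_zero
            intro x hx
            rw [Finset.mem_erase, Finset.mem_erase] at hx
            by_contra hc
            rcases honly x (Nat.pos_of_ne_zero hc) with h | h
            · exact hx.1 h
            · exact hx.2.1 h
          have e2 := sum_pair g hℓℓm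
          have ez2 : ∑ x ∈ (Finset.univ.erase ℓ).erase ℓm, g x = 0 := by
            apply Finset.sum_eq_zero
            intro x hx
            rw [Finset.mem_erase, Finset.mem_erase] at hx
            exact hgother x hx.2.1 hx.1
          rw [e1, ez, e2, ez2, hgℓ, hgℓm]
          omega
  obtain ⟨g, hg, hlt⟩ := himpr
  have hle := weight_le_alphaB (spider k d) g hg
  rw [← hmax] at hle
  omega
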